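/- Pairing leaves of a tree: let T be a finite tree and L a set of 2k distinguished vertices of T (the E-blocks). Then there exists a collection of k paths in T, each joining two distinct distinguished vertices, pairing up all 2k distinguished vertices, such that every vertex of the minimal subtree of T spanning L lies on at least one of the k paths. -/

import Mathlib

namespace TreePairingAux

open SimpleGraph

variable {V : Type*} [Fintype V] [DecidableEq V] {G : SimpleGraph V}

/-- In a tree, any path has length equal to the distance between its endpoints. -/
lemma path_length_eq_dist (hT : G.IsTree) {a b : V} {p : G.Walk a b} (hp : p.IsPath) :
    p.length = G.dist a b := by
  obtain ⟨w, hw⟩ := hT.isConnected.exists_walk_length_eq_dist a b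
  have hble : w.bypass.length ≤ w.length := SimpleGraph.Walk.length_bypass_le w
  have hdle : G.dist a b ≤ w.bypass.length := SimpleGraph.dist_le _
  have hb : w.bypass.length = G.dist a b := by omega
  have := (hT.existsUnique_path a b).unique hp w.bypass_isPath
  rw [this, hb]

/-- Membership in a path gives additivity of distances. -/
lemma mem_support_dist (hT : G.IsTree) {a b v : V} {p : G.Walk a b} (hp : p.IsPath)
    (hv : v ∈ p.support) : G.dist a v + G.dist v b = G.dist a b := by
  have hspec := p.take_spec hv
  have hq : (p.takeUntil v hv).IsPath := hp.takeUntil hv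
  have hr : (p.dropUntil v hv).IsPath := hp.dropUntil hv
  have hlen : (p.takeUntil v hv).length + (p.dropUntil v hv).length = p.length := by
    have := congrArg SimpleGraph.Walk.length hspec
    rwa [SimpleGraph.Walk.length_append] at this
  rw [← path_length_eq_dist hT hq, ← path_length_eq_dist hT hr,
    ← path_length_eq_dist hT hp, hlen]

/-- Conversely, distance additivity gives membership in the (unique) path. -/
lemma dist_eq_mem_support (hT : G.IsTree) {a b v : V} {p : G.Walk a b} (hp : p.IsPath)
    (h : G.dist a v + G.dist v b = G.dist a b) : v ∈ p.support := by
  obtain ⟨w1, hw1⟩ := hT.isConnected.exists_walk_length_eq_dist a v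
  obtain ⟨w2, hw2⟩ := hT.isConnected.exists_walk_length_eq_dist v b
  have hlen : (w1.append w2).length = G.dist a b := by
    rw [SimpleGraph.Walk.length_append, hw1, hw2, h]
  have hwp : (w1.append w2).IsPath := (w1.append w2).isPath_of_length_eq_dist hlen
  have := (hT.existsUnique_path a b).unique hp hwp
  rw [this]
  rw [SimpleGraph.Walk.mem_support_append_iff]
  exact Or.inl w1.end_mem_support

/-- If `v` is not on the path from `a` to `b`, the triangle inequality is strict. -/
lemma not_mem_strict (hT : G.IsTree) {a b v : V} {p : G.Walk a b} (hp : p.IsPath)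
    (hv : v ∉ p.support) : G.dist a b < G.dist a v + G.dist v b := by
  have hle : G.dist a b ≤ G.dist a v + G.dist v b := hT.isConnected.dist_triangle
  rcases lt_or_eq_of_le hle with h | h
  · exact h
  · exact absurd (dist_eq_mem_support hT hp h.symm) hv

/-- If some walk from `a` to `b` avoids `v`, so does the unique path. -/
lemma avoid (hT : G.IsTree) {a b v : V} (w : G.Walk a b) (hv : v ∉ w.support)
    {p : G.Walk a b} (hp : p.IsPath) : v ∉ p.support := by
  have := (hT.existsUnique_path a b).unique hp w.bypass_isPath
  rw [this]
  exact fun h => hv (w.support_bypass_subset h)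

/-- Betweenness transfer: if `v` lies on the path `x–y` but not on the path `x–z`,
then it lies on the path `z–y`. -/
lemma between (hT : G.IsTree) {x y z v : V}
    {pxy : G.Walk x y} (hpxy : pxy.IsPath) (hv : v ∈ pxy.support)
    {pxz : G.Walk x z} (hpxz : pxz.IsPath) (hv' : v ∉ pxz.support)
    {pzy : G.Walk z y} (hpzy : pzy.IsPath) : v ∈ pzy.support := by
  by_contra hvz
  have hw : v ∉ (pxz.append pzy).support := by
    rw [SimpleGraph.Walk.mem_support_append_iff]
    tauto
  exact (avoid hT _ hw hpxy) hv

/-- Existence of a fixed-point-free involution on a finset of even cardinality. -/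
lemma exists_invol (k : ℕ) : ∀ (L : Finset V), L.card = 2 * k →
    ∃ σ : V → V, (∀ x ∈ L, σ x ∈ L) ∧ (∀ x ∈ L, σ (σ x) = x) ∧ (∀ x ∈ L, σ x ≠ x) := by
  induction k with
  | zero =>
    intro L hL
    refine ⟨id, ?_, ?_, ?_⟩ <;> intro x hx <;>
      simp_all [Finset.card_eq_zero.1 (by omega : L.card = 0)]
  | succ n ih =>
    intro L hL
    obtain ⟨a, ha⟩ := Finset.card_pos.1 (by omega : 0 < L.card)
    obtain ⟨b, hb⟩ := Finset.card_pos.1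
      (show 0 < (L.erase a).card by rw [Finset.card_erase_of_mem ha]; omega)
    have hba : b ≠ a := Finset.ne_of_mem_erase hb
    have hbL : b ∈ L := Finset.mem_of_mem_erase hb
    obtain ⟨σ, h1, h2, h3⟩ := ih ((L.erase a).erase b)
      (by rw [Finset.card_erase_of_mem hb, Finset.card_erase_of_mem ha]; omega)
    refine ⟨fun z => if z = a then b else if z = b then a else σ z, ?_, ?_, ?_⟩
    · intro x hx
      by_cases hxa : x = a
      · simp [hxa, hbL]
      by_cases hxb : x = b
      · simp [hxa, hxb, hba, ha]
      · simp only [hxa, hxb, if_false]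
        have : x ∈ (L.erase a).erase b := by
          simp [Finset.mem_erase, hxa, hxb, hx]
        exact Finset.mem_of_mem_erase (Finset.mem_of_mem_erase (h1 x this))
    · intro x hx
      by_cases hxa : x = a
      · simp [hxa, hba]
      by_cases hxb : x = b
      · simp [hxa, hxb, hba, Ne.symm hba]
      · have hmem : x ∈ (L.erase a).erase b := by
          simp [Finset.mem_erase, hxa, hxb, hx]
        have hσ : σ x ∈ (L.erase a).erase b := h1 x hmem
        have hσa : σ x ≠ a := by
          intro h; exact (Finset.mem_erase.1 (Finset.mem_of_mem_erase hσ)).1 (h ▸ rfl)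
        have hσb : σ x ≠ b := (Finset.mem_erase.1 hσ).1
        simp only [hxa, hxb, if_false, hσa, hσb]
        exact h2 x hmem
    · intro x hx
      by_cases hxa : x = a
      · simpa [hxa] using hba
      by_cases hxb : x = b
      · subst hxb
        have hval : (if x = a then x else if x = x then a else σ x) = a := by
          rw [if_neg hxa, if_pos rfl]
        have hand : ¬x = a ∧ ¬a = x := ⟨hxa, Ne.symm hba⟩
        simpa [hval] using hand
      · have hmem : x ∈ (L.erase a).erase b := by
          simp [Finset.mem_erase, hxa, hxb, hx]
        simpa [hxa, hxb] using h3 x hmem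

end TreePairingAux

open TreePairingAux SimpleGraph in
/-- Pairing leaves of a tree (Proposition 11): if `L` is a set of `2k`
distinguished vertices of a finite tree, then there is a perfect pairing of
`L` (an involution `σ` of `L` without fixed points) such that every vertex of
the minimal subtree spanning `L` (i.e. every vertex lying on a path between
two `L`-vertices) lies on the path from some `x ∈ L` to `σ x`. -/
theorem stmt_14 {V : Type*} [Fintype V] [DecidableEq V]
    (G : SimpleGraph V) (hT : G.IsTree)
    (L : Finset V) (k : ℕ) (hL : L.card = 2 * k) :
    ∃ σ : V → V,
      (∀ x ∈ L, σ x ∈ L) ∧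
      (∀ x ∈ L, σ (σ x) = x) ∧
      (∀ x ∈ L, σ x ≠ x) ∧
      (∀ v : V,
        (∃ x ∈ L, ∃ y ∈ L, ∃ p : G.Walk x y, p.IsPath ∧ v ∈ p.support) →
        ∃ x ∈ L, ∃ p : G.Walk x (σ x), p.IsPath ∧ v ∈ p.support) := by
  classical
  -- the set of admissible pairings
  let P : (V → V) → Prop := fun σ =>
    (∀ x ∈ L, σ x ∈ L) ∧ (∀ x ∈ L, σ (σ x) = x) ∧ (∀ x ∈ L, σ x ≠ x)
  obtain ⟨σ0, hσ01, hσ02, hσ03⟩ := exists_invol k L hL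
  let S : Finset (V → V) := Finset.univ.filter P
  have hS0 : σ0 ∈ S := by
    simp only [S, Finset.mem_filter, Finset.mem_univ, true_and]
    exact ⟨hσ01, hσ02, hσ03⟩
  -- pick a pairing maximizing the total distance
  obtain ⟨σ, hσS, hmax⟩ := Finset.exists_max_image S
    (fun σ => ∑ x ∈ L, G.dist x (σ x)) ⟨σ0, hS0⟩
  obtain ⟨h1, h2, h3⟩ : P σ := (Finset.mem_filter.1 hσS).2
  refine ⟨σ, h1, h2, h3, ?_⟩
  intro v hv
  obtain ⟨x, hx, y, hy, p, hp, hvp⟩ := hv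
  by_contra hcov
  push_neg at hcov
  -- if v ∈ L, it is on its own path
  have hvL : v ∉ L := by
    intro hvL
    obtain ⟨q, hq, -⟩ := hT.existsUnique_path v (σ v)
    exact (hcov v hvL q hq) q.start_mem_support
  have hxv : x ≠ v := fun h => hvL (h ▸ hx)
  have hyv : y ≠ v := fun h => hvL (h ▸ hy)
  -- x ≠ y
  have hxy : x ≠ y := by
    rintro rfl
    have := SimpleGraph.Walk.isPath_iff_eq_nil.1 hp
    subst this
    simp only [SimpleGraph.Walk.support_nil, List.mem_singleton] at hvp
    exact hxv hvp.symm
  -- unique paths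
  obtain ⟨pxs, hpxs, -⟩ := hT.existsUnique_path x (σ x)
  obtain ⟨pys, hpys, -⟩ := hT.existsUnique_path y (σ y)
  obtain ⟨psxy, hpsxy, -⟩ := hT.existsUnique_path (σ x) y
  obtain ⟨pss, hpss, -⟩ := hT.existsUnique_path (σ x) (σ y)
  have hvxs : v ∉ pxs.support := hcov x hx pxs hpxs
  have hvys : v ∉ pys.support := hcov y hy pys hpys
  -- v is on the path σx – y
  have hvsxy : v ∈ psxy.support := between hT hp hvp hpxs hvxs hpsxy
  -- v is on the path σx – σy
  have hvss : v ∈ pss.support := by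
    obtain ⟨pyss, hpyss, -⟩ := hT.existsUnique_path y (σ x)
    obtain ⟨psys, hpsys, -⟩ := hT.existsUnique_path (σ y) (σ x)
    have hrev : v ∈ pyss.support := by
      have := (hT.existsUnique_path y (σ x)).unique hpyss hpsxy.reverse
      rw [this, SimpleGraph.Walk.support_reverse, List.mem_reverse]
      exact hvsxy
    have hmem : v ∈ psys.support := between hT hpyss hrev hpys hvys hpsys
    have := (hT.existsUnique_path (σ x) (σ y)).unique hpss hpsys.reverse
    rw [this, SimpleGraph.Walk.support_reverse, List.mem_reverse]
    exact hmem
  -- pairwise distinctness of x, y, σx, σy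
  have hsx : σ x ∈ L := h1 x hx
  have hsy : σ y ∈ L := h1 y hy
  have hxsx : σ x ≠ x := h3 x hx
  have hysy : σ y ≠ y := h3 y hy
  have hsxy : σ x ≠ y := by
    rintro h
    subst h
    have := (hT.existsUnique_path x (σ x)).unique hp hpxs
    exact (hcov x hx p hp) hvp
  have hxsy : σ y ≠ x := by
    intro h
    have : σ x = y := by rw [← h, h2 y hy]
    exact hsxy this
  have hss : σ x ≠ σ y := by
    intro h
    have : x = y := by rw [← h2 x hx, h, h2 y hy]
    exact hxy this
  -- distance identities
  have dxy : G.dist x v + G.dist v y = G.dist x y := mem_support_dist hT hp hvp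
  have dss : G.dist (σ x) v + G.dist v (σ y) = G.dist (σ x) (σ y) :=
    mem_support_dist hT hpss hvss
  have s1 : G.dist x (σ x) < G.dist x v + G.dist v (σ x) := not_mem_strict hT hpxs hvxs
  have s2 : G.dist y (σ y) < G.dist y v + G.dist v (σ y) := not_mem_strict hT hpys hvys
  -- the swapped pairing
  set τ : V → V := fun z =>
    if z = x then y else if z = y then x else
    if z = σ x then σ y else if z = σ y then σ x else σ z with hτdef
  have hτx : τ x = y := by simp [hτdef]
  have hτy : τ y = x := by simp [hτdef, hxy.symm]
  have hτsx : τ (σ x) = σ y := by simp [hτdef, hxsx, hsxy]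
  have hτsy : τ (σ y) = σ x := by simp [hτdef, hxsy, hysy, Ne.symm hss]
  have hτother : ∀ z, z ≠ x → z ≠ y → z ≠ σ x → z ≠ σ y → τ z = σ z := by
    intro z hz1 hz2 hz3 hz4; simp [hτdef, hz1, hz2, hz3, hz4]
  have hτS : τ ∈ S := by
    simp only [S, Finset.mem_filter, Finset.mem_univ, true_and]
    refine ⟨?_, ?_, ?_⟩
    · intro z hz
      by_cases hz1 : z = x; · rw [hz1, hτx]; exact hy
      by_cases hz2 : z = y; · rw [hz2, hτy]; exact hx
      by_cases hz3 : z = σ x; · rw [hz3, hτsx]; exact hsy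
      by_cases hz4 : z = σ y; · rw [hz4, hτsy]; exact hsx
      rw [hτother z hz1 hz2 hz3 hz4]; exact h1 z hz
    · intro z hz
      by_cases hz1 : z = x; · rw [hz1, hτx, hτy]
      by_cases hz2 : z = y; · rw [hz2, hτy, hτx]
      by_cases hz3 : z = σ x; · rw [hz3, hτsx, hτsy]
      by_cases hz4 : z = σ y; · rw [hz4, hτsy, hτsx]
      rw [hτother z hz1 hz2 hz3 hz4]
      have e1 : σ z ≠ x := fun h => hz3 (by rw [← h, h2 z hz])
      have e2 : σ z ≠ y := fun h => hz4 (by rw [← h, h2 z hz])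
      have e3 : σ z ≠ σ x := fun h => hz1 (by rw [← h2 z hz, h, h2 x hx])
      have e4 : σ z ≠ σ y := fun h => hz2 (by rw [← h2 z hz, h, h2 y hy])
      rw [hτother (σ z) e1 e2 e3 e4]
      exact h2 z hz
    · intro z hz
      by_cases hz1 : z = x; · rw [hz1, hτx]; exact hxy.symm
      by_cases hz2 : z = y; · rw [hz2, hτy]; exact hxy
      by_cases hz3 : z = σ x; · rw [hz3, hτsx]; exact Ne.symm hss
      by_cases hz4 : z = σ y; · rw [hz4, hτsy]; exact hss
      rw [hτother z hz1 hz2 hz3 hz4]; exact h3 z hz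
  -- compare the sums over the four special vertices
  have hmaxτ := hmax τ hτS
  set A : Finset V := insert x (insert y (insert (σ x) {σ y})) with hA
  have hAL : A ⊆ L := by
    intro z hz
    simp only [hA, Finset.mem_insert, Finset.mem_singleton] at hz
    rcases hz with rfl | rfl | rfl | rfl <;> assumption
  have hsplit : ∀ f : V → ℕ, ∑ z ∈ L, f z = ∑ z ∈ A, f z + ∑ z ∈ L \ A, f z := by
    intro f
    rw [← Finset.sum_union (Finset.disjoint_sdiff), Finset.union_sdiff_of_subset hAL]
  have hrest : ∑ z ∈ L \ A, G.dist z (τ z) = ∑ z ∈ L \ A, G.dist z (σ z) := by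
    apply Finset.sum_congr rfl
    intro z hz
    simp only [hA, Finset.mem_sdiff, Finset.mem_insert, Finset.mem_singleton, not_or] at hz
    rw [hτother z hz.2.1 hz.2.2.1 hz.2.2.2.1 hz.2.2.2.2]
  have hAsum : ∀ f : V → ℕ, ∑ z ∈ A, f z = f x + f y + f (σ x) + f (σ y) := by
    intro f
    rw [hA, Finset.sum_insert (by
        simp only [Finset.mem_insert, Finset.mem_singleton]
        push_neg
        exact ⟨hxy, fun h => hxsx h.symm, fun h => hxsy h.symm⟩),
      Finset.sum_insert (by
        simp only [Finset.mem_insert, Finset.mem_singleton]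
        push_neg
        exact ⟨fun h => hsxy h.symm, fun h => hysy h.symm⟩),
      Finset.sum_insert (by simpa using hss), Finset.sum_singleton]
    ring
  have hτA : ∑ z ∈ A, G.dist z (τ z)
      = G.dist x y + G.dist y x + G.dist (σ x) (σ y) + G.dist (σ y) (σ x) := by
    rw [hAsum, hτx, hτy, hτsx, hτsy]
  have hσA : ∑ z ∈ A, G.dist z (σ z)
      = G.dist x (σ x) + G.dist y (σ y) + G.dist (σ x) x + G.dist (σ y) y := by
    rw [hAsum]
    congr 1
    congr 1
    · rw [h2 x hx]
    · rw [h2 y hy]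
  -- derive the contradiction
  rw [hsplit (fun z => G.dist z (τ z)), hsplit (fun z => G.dist z (σ z)),
    hrest, hτA, hσA] at hmaxτ
  have c1 : G.dist y x = G.dist x y := SimpleGraph.dist_comm
  have c2 : G.dist (σ y) (σ x) = G.dist (σ x) (σ y) := SimpleGraph.dist_comm
  have c3 : G.dist (σ x) x = G.dist x (σ x) := SimpleGraph.dist_comm
  have c4 : G.dist (σ y) y = G.dist y (σ y) := SimpleGraph.dist_comm
  have c5 : G.dist v (σ x) = G.dist (σ x) v := SimpleGraph.dist_comm
  have c6 : G.dist y v = G.dist v y := SimpleGraph.dist_comm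
  omega
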